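/- arXiv:2110.12751 — 3 statements merged into one kernel-verified Lean document; each statement's English description precedes it below -/
import Mathlib

section
/- Suppose the noise density p is symmetric with Fourier transform p̂ that is real, nonnegative, and satisfies p̂(ξ) ≥ C₀ > 0 for |ξ| ≤ c₀. Then for σ > 0 and any b with |b| ≤ 2M, σ² ∫ [exp(-t²/σ²) - exp(-(t-b)²/σ²)] p(t) dt ≥ c_σ · b², where c_σ = (σ³/π^{5/2}) · C₀ · ∫_{-c'}^{c'} ξ² exp(-σ²ξ²/4) dξ and c' = min(c₀, π/(2M)). -/
open MeasureTheory


private lemma gauss_inv {σ : ℝ} (hσ : 0 < σ) (x : ℝ) :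
    ∫ ξ : ℝ, Complex.exp (Complex.I * x * ξ) * Complex.exp (-((σ ^ 2 / 4 : ℝ) : ℂ) * ξ ^ 2)
      = ((2 * Real.sqrt Real.pi / σ * Real.exp (-(x ^ 2) / σ ^ 2) : ℝ) : ℂ) := by
  have hπ := Real.pi_pos
  have hb : (0 : ℝ) < (((σ ^ 2 / 4 : ℝ) : ℂ)).re := by
    simp only [Complex.ofReal_re]; positivity
  have h := fourierIntegral_gaussian hb (x : ℂ)
  rw [h]
  have h1 : -(x : ℂ) ^ 2 / (4 * ((σ ^ 2 / 4 : ℝ) : ℂ)) = ((-(x ^ 2) / σ ^ 2 : ℝ) : ℂ) := by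
    push_cast; field_simp
  have h2 : ((Real.pi : ℂ) / ((σ ^ 2 / 4 : ℝ) : ℂ)) ^ (1 / 2 : ℂ)
      = ((2 * Real.sqrt Real.pi / σ : ℝ) : ℂ) := by
    have e1 : ((Real.pi : ℂ) / ((σ ^ 2 / 4 : ℝ) : ℂ)) = ((Real.pi / (σ ^ 2 / 4) : ℝ) : ℂ) := by
      push_cast; ring
    have e2 : ((1 : ℂ) / 2) = (((1 / 2 : ℝ) : ℂ)) := by norm_num
    rw [e1, e2, ← Complex.ofReal_cpow (by positivity) (1 / 2 : ℝ)]
    congr 1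
    rw [← Real.sqrt_eq_rpow]
    rw [show Real.pi / (σ ^ 2 / 4) = (2 * Real.sqrt Real.pi / σ) ^ 2 by
      rw [div_pow, mul_pow, Real.sq_sqrt hπ.le]; ring,
      Real.sqrt_sq (by positivity)]
  rw [h1, h2, ← Complex.ofReal_exp, ← Complex.ofReal_mul]

private lemma norm_exp_I_mul (a c : ℝ) : ‖Complex.exp (Complex.I * a * c)‖ = 1 := by
  rw [Complex.norm_exp]
  simp [Complex.mul_re]

private lemma exp_neg_cast (s ξ : ℝ) :
    Complex.exp (-(s : ℂ) * (ξ : ℂ) ^ 2) = ((Real.exp (-(s * ξ ^ 2)) : ℝ) : ℂ) := by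
  rw [Complex.ofReal_exp]; push_cast; ring_nf

private lemma plancherel_step (σ b : ℝ) (hσ : 0 < σ) (p : ℝ → ℝ)
    (hp_nonneg : ∀ t, 0 ≤ p t) (hp_int : Integrable p)
    (phat : ℝ → ℝ)
    (hphat : ∀ ξ : ℝ, (phat ξ : ℂ) = ∫ t : ℝ, Complex.exp (-(Complex.I * ξ * t)) * (p t : ℂ)) :
    (∫ t, (Real.exp (-(t ^ 2) / σ ^ 2) - Real.exp (-((t - b) ^ 2) / σ ^ 2)) * p t)
      = (σ / (2 * Real.sqrt Real.pi)) *
        ∫ ξ, Real.exp (-(σ ^ 2 / 4 * ξ ^ 2)) * ((1 - Real.cos (b * ξ)) * phat ξ) ∧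
    Integrable (fun ξ => Real.exp (-(σ ^ 2 / 4 * ξ ^ 2)) * ((1 - Real.cos (b * ξ)) * phat ξ)) := by
  have hπ := Real.pi_pos
  have hsqπ : (0:ℝ) < Real.sqrt Real.pi := Real.sqrt_pos.mpr hπ
  set s : ℝ := σ ^ 2 / 4 with hsdef
  have hs : 0 < s := by positivity
  set κ : ℝ := σ / (2 * Real.sqrt Real.pi) with hκdef
  set F : ℝ → ℝ → ℂ := fun t ξ =>
    (Complex.exp (Complex.I * t * ξ) - Complex.exp (Complex.I * (t - b) * ξ)) *
      Complex.exp (-(s : ℂ) * ξ ^ 2) * (p t : ℂ) with hFdef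
  set Φ : ℝ → ℂ := fun ξ =>
    Complex.exp (-(s : ℂ) * ξ ^ 2) *
      ((1 - Complex.exp (Complex.I * b * ξ)) * ((phat ξ : ℝ) : ℂ)) with hΦdef
  have hpC : AEStronglyMeasurable (fun t => (p t : ℂ)) volume :=
    Complex.continuous_ofReal.comp_aestronglyMeasurable hp_int.1
  -- Integrability of uncurry F
  have hF : Integrable (Function.uncurry F) (volume.prod volume) := by
    have hbd : Integrable (fun z : ℝ × ℝ => p z.1 * (2 * Real.exp (-(s * z.2 ^ 2))))
        (volume.prod volume) := by
      have := hp_int.mul_prod ((integrable_exp_neg_mul_sq hs).const_mul 2)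
      simpa [neg_mul] using this
    refine hbd.mono' ?_ ?_
    · apply AEStronglyMeasurable.mul
      · exact (Continuous.aestronglyMeasurable (by fun_prop))
      · exact hpC.comp_fst
    · refine Filter.Eventually.of_forall fun z => ?_
      have h1 : ‖Complex.exp (Complex.I * z.1 * z.2) - Complex.exp (Complex.I * (z.1 - b) * z.2)‖
          ≤ 2 := by
        refine (norm_sub_le _ _).trans ?_
        have e : ((z.1 : ℂ) - (b : ℂ)) = (((z.1 - b : ℝ)) : ℂ) := by push_cast; ring
        rw [norm_exp_I_mul, e, norm_exp_I_mul]; norm_num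
      calc ‖Function.uncurry F z‖
          = ‖Complex.exp (Complex.I * z.1 * z.2) - Complex.exp (Complex.I * (z.1 - b) * z.2)‖
            * ‖Complex.exp (-(s : ℂ) * z.2 ^ 2)‖ * ‖(p z.1 : ℂ)‖ := by
            simp [Function.uncurry, hFdef, norm_mul]
        _ ≤ 2 * Real.exp (-(s * z.2 ^ 2)) * p z.1 := by
            rw [exp_neg_cast, Complex.norm_real, Real.norm_eq_abs, Real.abs_exp,
              Complex.norm_real, Real.norm_eq_abs, abs_of_nonneg (hp_nonneg _)]
            exact mul_le_mul_of_nonneg_right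
              (mul_le_mul_of_nonneg_right h1 (Real.exp_nonneg _)) (hp_nonneg _)
        _ = p z.1 * (2 * Real.exp (-(s * z.2 ^ 2))) := by ring
  -- per-t gaussian inversion
  have hginv : ∀ x : ℝ, ((Real.exp (-(x ^ 2) / σ ^ 2) : ℝ) : ℂ)
      = (κ : ℝ) * ∫ ξ : ℝ, Complex.exp (Complex.I * x * ξ) * Complex.exp (-(s : ℂ) * ξ ^ 2) := by
    intro x
    rw [gauss_inv hσ x, ← Complex.ofReal_mul]
    congr 1
    rw [hκdef]
    field_simp
  -- inner t-integral for fixed ξ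
  have hint1 : ∀ c ξ : ℝ, Integrable (fun t : ℝ =>
      Complex.exp (Complex.I * ((t : ℂ) - (c : ℂ)) * ξ) * (p t : ℂ)) := by
    intro c ξ
    refine hp_int.mono' ?_ ?_
    · exact (Continuous.aestronglyMeasurable (by fun_prop)).mul hpC
    · refine Filter.Eventually.of_forall fun t => ?_
      have e : ((t : ℂ) - (c : ℂ)) = (((t - c : ℝ)) : ℂ) := by push_cast; ring
      rw [norm_mul, e, norm_exp_I_mul, one_mul, Complex.norm_real, Real.norm_eq_abs,
        abs_of_nonneg (hp_nonneg _)]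
  have hint0 : ∀ ξ : ℝ, Integrable (fun t : ℝ =>
      Complex.exp (Complex.I * (t : ℂ) * ξ) * (p t : ℂ)) := by
    intro ξ
    have := hint1 0 ξ
    simpa using this
  have hA : ∀ ξ : ℝ, (∫ t : ℝ, Complex.exp (Complex.I * t * ξ) * (p t : ℂ))
      = ((phat (-ξ) : ℝ) : ℂ) := by
    intro ξ
    rw [hphat (-ξ)]
    congr 1
    funext t
    have e : -(Complex.I * ((-ξ : ℝ) : ℂ) * (t : ℂ)) = Complex.I * t * ξ := by push_cast; ring
    rw [e]
  have hB : ∀ ξ : ℝ, (∫ t : ℝ, Complex.exp (Complex.I * ((t : ℂ) - (b : ℂ)) * ξ) * (p t : ℂ))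
      = Complex.exp (-(Complex.I * b * ξ)) * ((phat (-ξ) : ℝ) : ℂ) := by
    intro ξ
    have e : (fun t : ℝ => Complex.exp (Complex.I * ((t : ℂ) - (b : ℂ)) * ξ) * (p t : ℂ))
        = fun t : ℝ => Complex.exp (-(Complex.I * b * ξ)) *
            (Complex.exp (Complex.I * t * ξ) * (p t : ℂ)) := by
      funext t
      rw [← mul_assoc, ← Complex.exp_add]
      congr 2
      ring
    rw [e, MeasureTheory.integral_const_mul, hA]
  have hinner : ∀ ξ : ℝ, (∫ t, F t ξ) = Φ (-ξ) := by
    intro ξ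
    have e : (fun t : ℝ => F t ξ) = fun t : ℝ =>
        Complex.exp (-(s : ℂ) * ξ ^ 2) *
          (Complex.exp (Complex.I * t * ξ) * (p t : ℂ) -
            Complex.exp (Complex.I * ((t : ℂ) - (b : ℂ)) * ξ) * (p t : ℂ)) := by
      funext t
      simp only [hFdef]
      ring
    rw [e, MeasureTheory.integral_const_mul, integral_sub (hint0 ξ) (hint1 b ξ), hA, hB]
    simp only [hΦdef, Complex.ofReal_neg, neg_neg]
    have e2 : (-(s : ℂ)) * (-(ξ:ℂ)) ^ 2 = -(s : ℂ) * ξ ^ 2 := by ring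
    have e3 : Complex.I * (b : ℂ) * (-(ξ:ℂ)) = -(Complex.I * b * ξ) := by ring
    rw [e2, e3]
    ring
  -- the key complex identity
  have key : ((∫ t, (Real.exp (-(t ^ 2) / σ ^ 2) - Real.exp (-((t - b) ^ 2) / σ ^ 2)) * p t : ℝ) : ℂ)
      = (κ : ℝ) * ∫ ξ, Φ ξ := by
    have cast1 : ((∫ t, (Real.exp (-(t ^ 2) / σ ^ 2) - Real.exp (-((t - b) ^ 2) / σ ^ 2)) * p t : ℝ) : ℂ)
        = ∫ t, (((Real.exp (-(t ^ 2) / σ ^ 2) - Real.exp (-((t - b) ^ 2) / σ ^ 2)) * p t : ℝ) : ℂ) := by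
      exact (integral_ofReal).symm
    rw [cast1]
    have hpt : ∀ t : ℝ, (((Real.exp (-(t ^ 2) / σ ^ 2) - Real.exp (-((t - b) ^ 2) / σ ^ 2)) * p t : ℝ) : ℂ)
        = (κ : ℝ) * ∫ ξ, F t ξ := by
      intro t
      have hI1 : Integrable (fun ξ : ℝ =>
          Complex.exp (Complex.I * t * ξ) * Complex.exp (-(s : ℂ) * ξ ^ 2)) := by
        have h := integrable_cexp_quadratic (b := (s : ℂ)) (by simp [hs]) (Complex.I * t) 0
        refine h.congr (Filter.Eventually.of_forall fun ξ => ?_)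
        simp only [add_zero, ← Complex.exp_add]
        congr 1
        ring
      have hI2 : Integrable (fun ξ : ℝ =>
          Complex.exp (Complex.I * ((t : ℂ) - (b : ℂ)) * ξ) * Complex.exp (-(s : ℂ) * ξ ^ 2)) := by
        have h := integrable_cexp_quadratic (b := (s : ℂ)) (by simp [hs]) (Complex.I * ((t : ℂ) - (b : ℂ))) 0
        refine h.congr (Filter.Eventually.of_forall fun ξ => ?_)
        simp only [add_zero, ← Complex.exp_add]
        congr 1
        ring
      have e : (fun ξ : ℝ => F t ξ) = fun ξ : ℝ =>
          (Complex.exp (Complex.I * t * ξ) * Complex.exp (-(s : ℂ) * ξ ^ 2) -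
            Complex.exp (Complex.I * ((t : ℂ) - (b : ℂ)) * ξ) * Complex.exp (-(s : ℂ) * ξ ^ 2))
            * (p t : ℂ) := by
        funext ξ
        simp only [hFdef]
        ring
      rw [e, MeasureTheory.integral_mul_const, integral_sub hI1 hI2]
      have g1 := hginv t
      have g2 := hginv (t - b)
      have e4 : (fun ξ : ℝ => Complex.exp (Complex.I * ((t - b : ℝ) : ℂ) * ξ) *
          Complex.exp (-(s : ℂ) * ξ ^ 2)) = fun ξ : ℝ =>
          Complex.exp (Complex.I * ((t : ℂ) - (b : ℂ)) * ξ) * Complex.exp (-(s : ℂ) * ξ ^ 2) := by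
        funext ξ; push_cast; ring_nf
      rw [e4] at g2
      push_cast [g1, g2]
      ring
    simp_rw [hpt]
    rw [MeasureTheory.integral_const_mul]
    congr 1
    have swap := integral_integral_swap hF
    rw [swap]
    have e : (fun ξ : ℝ => ∫ t, F t ξ) = fun ξ : ℝ => Φ (-ξ) := funext hinner
    rw [e, integral_neg_eq_self]
  -- integrability of Φ
  have hΦint : Integrable Φ := by
    have h1 : Integrable (fun ξ : ℝ => ∫ t, F t ξ) := by
      have := hF.integral_prod_right
      simpa [Function.uncurry] using this
    have h2 : Integrable (fun ξ : ℝ => Φ (-ξ)) := h1.congr (Filter.Eventually.of_forall hinner)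
    have h3 := h2.comp_neg
    simpa using h3
  -- real parts
  have hre : ∀ ξ : ℝ, (Φ ξ).re = Real.exp (-(s * ξ ^ 2)) * ((1 - Real.cos (b * ξ)) * phat ξ) := by
    intro ξ
    have e : Complex.exp (Complex.I * b * ξ)
        = ((Real.cos (b * ξ) : ℝ) : ℂ) + ((Real.sin (b * ξ) : ℝ) : ℂ) * Complex.I := by
      rw [show Complex.I * (b : ℂ) * (ξ : ℂ) = ((b * ξ : ℝ) : ℂ) * Complex.I by push_cast; ring,
        Complex.exp_mul_I, Complex.ofReal_cos, Complex.ofReal_sin]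
    simp only [hΦdef, exp_neg_cast, e]
    simp only [Complex.mul_re, Complex.mul_im, Complex.sub_re, Complex.sub_im, Complex.one_re,
      Complex.one_im, Complex.add_re, Complex.add_im, Complex.ofReal_re, Complex.ofReal_im,
      Complex.I_re, Complex.I_im]
    ring
  have hre_int : ∫ ξ, (Φ ξ).re = (∫ ξ, Φ ξ).re := by
    have := Complex.reCLM.integral_comp_comm hΦint
    simpa using this
  have hfinal : Integrable (fun ξ => Real.exp (-(s * ξ ^ 2)) * ((1 - Real.cos (b * ξ)) * phat ξ)) := by
    have h := hΦint.re
    refine h.congr (Filter.Eventually.of_forall fun ξ => ?_)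
    exact (hre ξ)
  constructor
  · have hL : (∫ t, (Real.exp (-(t ^ 2) / σ ^ 2) - Real.exp (-((t - b) ^ 2) / σ ^ 2)) * p t)
        = ((((∫ t, (Real.exp (-(t ^ 2) / σ ^ 2) - Real.exp (-((t - b) ^ 2) / σ ^ 2)) * p t) : ℝ) : ℂ)).re := by
      rw [Complex.ofReal_re]
    rw [hL, key, Complex.re_ofReal_mul, ← hre_int]
    congr 1
    exact integral_congr_ae (Filter.Eventually.of_forall fun ξ => hre ξ)
  · exact hfinal


private lemma one_sub_cos_ge {θ : ℝ} (hθ : |θ| ≤ Real.pi) :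
    2 * θ ^ 2 / Real.pi ^ 2 ≤ 1 - Real.cos θ := by
  have hπ := Real.pi_pos
  have h1 : |θ| / 2 ≤ Real.pi / 2 := by linarith
  have hj := Real.mul_le_sin (x := |θ| / 2) (by positivity) h1
  have hsq : Real.sin (|θ| / 2) ^ 2 = Real.sin (θ / 2) ^ 2 := by
    rcases abs_cases θ with ⟨h, _⟩ | ⟨h, _⟩
    · rw [h]
    · rw [h, show -θ / 2 = -(θ / 2) by ring, Real.sin_neg]; ring
  have hcos : Real.cos θ = 1 - 2 * Real.sin (θ / 2) ^ 2 := by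
    have h2 := Real.sin_sq_add_cos_sq (θ / 2)
    have h3 := Real.cos_sq (θ / 2)
    rw [show 2 * (θ / 2) = θ by ring] at h3
    linarith
  have hb : (2 / Real.pi * (|θ| / 2)) ^ 2 ≤ Real.sin (|θ| / 2) ^ 2 :=
    pow_le_pow_left₀ (by positivity) hj 2
  have he : (2 / Real.pi * (|θ| / 2)) ^ 2 = θ ^ 2 / Real.pi ^ 2 := by
    rw [mul_pow, div_pow, div_pow, sq_abs]
    field_simp
  rw [he, hsq] at hb
  have hb2 : 2 * (θ ^ 2 / Real.pi ^ 2) ≤ 2 * Real.sin (θ / 2) ^ 2 := by linarith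
  calc 2 * θ ^ 2 / Real.pi ^ 2 = 2 * (θ ^ 2 / Real.pi ^ 2) := by ring
    _ ≤ 2 * Real.sin (θ / 2) ^ 2 := hb2
    _ = 1 - Real.cos θ := by rw [hcos]; ring
theorem correntropy_risk_lower_bound (σ M c₀ C₀ b : ℝ)
    (hσ : 0 < σ) (hM : 0 < M) (hc₀ : 0 < c₀) (hC₀ : 0 < C₀)
    (hb : |b| ≤ 2 * M) (p : ℝ → ℝ)
    (hp_nonneg : ∀ t, 0 ≤ p t) (hp_int : Integrable p)
    (hp_prob : ∫ t, p t = 1) (hp_symm : ∀ t, p t = p (-t))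
    (phat : ℝ → ℝ)
    (hphat : ∀ ξ : ℝ, (phat ξ : ℂ) = ∫ t : ℝ, Complex.exp (-(Complex.I * ξ * t)) * (p t : ℂ))
    (hphat_nonneg : ∀ ξ, 0 ≤ phat ξ)
    (hphat_lb : ∀ ξ, |ξ| ≤ c₀ → C₀ ≤ phat ξ) :
    σ ^ 2 * ∫ t, (Real.exp (-(t ^ 2) / σ ^ 2) - Real.exp (-((t - b) ^ 2) / σ ^ 2)) * p t ≥
      (σ ^ 3 / Real.pi ^ ((5 : ℝ) / 2) * C₀ *
        ∫ ξ in Set.Icc (-(min c₀ (Real.pi / (2 * M)))) (min c₀ (Real.pi / (2 * M))),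
          ξ ^ 2 * Real.exp (-(σ ^ 2 * ξ ^ 2) / 4)) * b ^ 2 := by
  have hπ := Real.pi_pos
  have hsqπ : (0:ℝ) < Real.sqrt Real.pi := Real.sqrt_pos.mpr hπ
  obtain ⟨hkey, hint⟩ := plancherel_step σ b hσ p hp_nonneg hp_int phat hphat
  set c' : ℝ := min c₀ (Real.pi / (2 * M)) with hc'
  have hc'pos : 0 < c' := lt_min hc₀ (by positivity)
  set g : ℝ → ℝ := fun ξ => Real.exp (-(σ ^ 2 / 4 * ξ ^ 2)) * ((1 - Real.cos (b * ξ)) * phat ξ)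
    with hg
  have hg_nonneg : ∀ ξ, 0 ≤ g ξ := fun ξ =>
    mul_nonneg (Real.exp_nonneg _)
      (mul_nonneg (by linarith [Real.cos_le_one (b * ξ)]) (hphat_nonneg ξ))
  have hlow : ∀ ξ ∈ Set.Icc (-c') c',
      (2 / Real.pi ^ 2 * C₀ * b ^ 2) * (ξ ^ 2 * Real.exp (-(σ ^ 2 * ξ ^ 2) / 4)) ≤ g ξ := by
    intro ξ hξ
    have hξabs : |ξ| ≤ c' := abs_le.mpr ⟨hξ.1, hξ.2⟩
    have h1 : |b * ξ| ≤ Real.pi := by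
      rw [abs_mul]
      calc |b| * |ξ| ≤ (2 * M) * (Real.pi / (2 * M)) :=
            mul_le_mul hb (hξabs.trans (min_le_right _ _)) (abs_nonneg _) (by positivity)
        _ = Real.pi := by field_simp
    have h2 := one_sub_cos_ge h1
    have h3 : C₀ ≤ phat ξ := hphat_lb ξ (hξabs.trans (min_le_left _ _))
    have hexp : Real.exp (-(σ ^ 2 * ξ ^ 2) / 4) = Real.exp (-(σ ^ 2 / 4 * ξ ^ 2)) := by
      congr 1; ring
    rw [hexp]
    calc (2 / Real.pi ^ 2 * C₀ * b ^ 2) * (ξ ^ 2 * Real.exp (-(σ ^ 2 / 4 * ξ ^ 2)))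
        = Real.exp (-(σ ^ 2 / 4 * ξ ^ 2)) * ((2 * (b * ξ) ^ 2 / Real.pi ^ 2) * C₀) := by ring
      _ ≤ Real.exp (-(σ ^ 2 / 4 * ξ ^ 2)) * ((1 - Real.cos (b * ξ)) * phat ξ) := by
          refine mul_le_mul_of_nonneg_left ?_ (Real.exp_nonneg _)
          exact mul_le_mul h2 h3 hC₀.le (by linarith [Real.cos_le_one (b * ξ)])
      _ = g ξ := rfl
  have hIcc_le : (∫ ξ in Set.Icc (-c') c', g ξ) ≤ ∫ ξ, g ξ :=
    setIntegral_le_integral hint (ae_of_all _ hg_nonneg)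
  have hmono : (∫ ξ in Set.Icc (-c') c',
        (2 / Real.pi ^ 2 * C₀ * b ^ 2) * (ξ ^ 2 * Real.exp (-(σ ^ 2 * ξ ^ 2) / 4)))
      ≤ ∫ ξ in Set.Icc (-c') c', g ξ := by
    refine setIntegral_mono_on ?_ hint.integrableOn measurableSet_Icc hlow
    exact (Continuous.integrableOn_Icc (by fun_prop))
  have hconst : (∫ ξ in Set.Icc (-c') c',
        (2 / Real.pi ^ 2 * C₀ * b ^ 2) * (ξ ^ 2 * Real.exp (-(σ ^ 2 * ξ ^ 2) / 4)))
      = (2 / Real.pi ^ 2 * C₀ * b ^ 2) *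
        ∫ ξ in Set.Icc (-c') c', ξ ^ 2 * Real.exp (-(σ ^ 2 * ξ ^ 2) / 4) :=
    MeasureTheory.integral_const_mul _ _
  have hpow : Real.pi ^ ((5 : ℝ) / 2) = Real.sqrt Real.pi * Real.pi ^ 2 := by
    rw [show ((5 : ℝ) / 2) = (1 / 2 : ℝ) + 2 by norm_num, Real.rpow_add hπ,
      ← Real.sqrt_eq_rpow, show ((2 : ℝ)) = ((2 : ℕ) : ℝ) by norm_num, Real.rpow_natCast]
  rw [ge_iff_le]
  calc (σ ^ 3 / Real.pi ^ ((5 : ℝ) / 2) * C₀ *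
        ∫ ξ in Set.Icc (-c') c', ξ ^ 2 * Real.exp (-(σ ^ 2 * ξ ^ 2) / 4)) * b ^ 2
      = σ ^ 2 * (σ / (2 * Real.sqrt Real.pi)) * ((2 / Real.pi ^ 2 * C₀ * b ^ 2) *
        ∫ ξ in Set.Icc (-c') c', ξ ^ 2 * Real.exp (-(σ ^ 2 * ξ ^ 2) / 4)) := by
        rw [hpow]; field_simp
    _ ≤ σ ^ 2 * (σ / (2 * Real.sqrt Real.pi)) * ∫ ξ, g ξ := by
        refine mul_le_mul_of_nonneg_left ?_ (by positivity)
        rw [← hconst]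
        exact hmono.trans hIcc_le
    _ = σ ^ 2 * ∫ t, (Real.exp (-(t ^ 2) / σ ^ 2) - Real.exp (-((t - b) ^ 2) / σ ^ 2)) * p t := by
        rw [hkey]; ring
end

section
/- Suppose the noise density p is symmetric about 0. Then for any σ > 0 and any b ∈ ℝ, σ² ∫ [exp(-t²/σ²) - exp(-(t-b)²/σ²)] p(t) dt ≤ b². -/
open MeasureTheory

theorem correntropy_risk_upper_bound (σ b : ℝ) (hσ : 0 < σ) (p : ℝ → ℝ)
    (hp_nonneg : ∀ t, 0 ≤ p t) (hp_int : Integrable p)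
    (hp_prob : ∫ t, p t = 1) (hp_symm : ∀ t, p t = p (-t)) :
    σ ^ 2 * ∫ t, (Real.exp (-(t ^ 2) / σ ^ 2) - Real.exp (-((t - b) ^ 2) / σ ^ 2)) * p t ≤
      b ^ 2 := by
  have hs0 : (0:ℝ) < σ ^ 2 := by positivity
  set s := σ ^ 2 with hs
  set g : ℝ → ℝ := fun t => Real.exp (-(t ^ 2) / s) - Real.exp (-((t - b) ^ 2) / s) with hg
  have hexp_le_one : ∀ x : ℝ, Real.exp (-(x ^ 2) / s) ≤ 1 := by
    intro x
    apply Real.exp_le_one_iff.mpr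
    have h : -(x ^ 2) ≤ 0 := by nlinarith [sq_nonneg x]
    exact div_nonpos_of_nonpos_of_nonneg h hs0.le
  have hgbdd : ∀ t, ‖g t‖ ≤ 2 := by
    intro t
    have h1 := hexp_le_one t
    have h2 := hexp_le_one (t - b)
    have h3 := Real.exp_pos (-(t ^ 2) / s)
    have h4 := Real.exp_pos (-((t - b) ^ 2) / s)
    rw [Real.norm_eq_abs, abs_le]
    constructor <;> simp only [hg] <;> nlinarith
  have hgc : Continuous g := by fun_prop
  have hint : Integrable (fun t => g t * p t) :=
    hp_int.bdd_mul (c := 2) hgc.aestronglyMeasurable (Filter.Eventually.of_forall hgbdd)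
  have hgc' : Continuous (fun t => g (-t)) := hgc.comp continuous_neg
  have hint' : Integrable (fun t => g (-t) * p t) :=
    hp_int.bdd_mul (c := 2) hgc'.aestronglyMeasurable (Filter.Eventually.of_forall fun t => hgbdd (-t))
  -- symmetry: ∫ g t * p t = ∫ g (-t) * p t
  have hsymm : (∫ t, g t * p t) = ∫ t, g (-t) * p t := by
    have := integral_neg_eq_self (fun t => g t * p t) volume
    rw [← this]
    congr 1
    funext t
    rw [← hp_symm t]
  -- pointwise bound on g t + g (-t)
  have hpt : ∀ t, g t + g (-t) ≤ 2 * b ^ 2 / s := by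
    intro t
    simp only [hg]
    have e1 : Real.exp (-((t - b) ^ 2) / s)
        = Real.exp (-(t ^ 2) / s) * Real.exp ((t ^ 2 - (t - b) ^ 2) / s) := by
      rw [← Real.exp_add]; ring_nf
    have e2 : Real.exp (-((-t - b) ^ 2) / s)
        = Real.exp (-(t ^ 2) / s) * Real.exp ((t ^ 2 - (t + b) ^ 2) / s) := by
      rw [← Real.exp_add]; ring_nf
    have h1 : 1 + (t ^ 2 - (t - b) ^ 2) / s ≤ Real.exp ((t ^ 2 - (t - b) ^ 2) / s) := by
      have := Real.add_one_le_exp ((t ^ 2 - (t - b) ^ 2) / s); linarith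
    have h2 : 1 + (t ^ 2 - (t + b) ^ 2) / s ≤ Real.exp ((t ^ 2 - (t + b) ^ 2) / s) := by
      have := Real.add_one_le_exp ((t ^ 2 - (t + b) ^ 2) / s); linarith
    have hA : 0 < Real.exp (-(t ^ 2) / s) := Real.exp_pos _
    have hA1 : Real.exp (-(t ^ 2) / s) ≤ 1 := hexp_le_one t
    have neg_sq : (-t) ^ 2 = t ^ 2 := by ring
    rw [neg_sq, e1, e2]
    have key : (t ^ 2 - (t - b) ^ 2) / s + (t ^ 2 - (t + b) ^ 2) / s = -(2 * b ^ 2) / s := by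
      field_simp; ring
    have hb2 : 0 ≤ 2 * b ^ 2 / s := by positivity
    have key2 : Real.exp (-(t ^ 2) / s) * ((t ^ 2 - (t - b) ^ 2) / s)
        + Real.exp (-(t ^ 2) / s) * ((t ^ 2 - (t + b) ^ 2) / s)
        = -(Real.exp (-(t ^ 2) / s) * (2 * b ^ 2 / s)) := by
      have : Real.exp (-(t ^ 2) / s) * (((t ^ 2 - (t - b) ^ 2) / s) + ((t ^ 2 - (t + b) ^ 2) / s))
          = Real.exp (-(t ^ 2) / s) * (-(2 * b ^ 2) / s) := by rw [key]
      linear_combination this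
    nlinarith [mul_le_mul_of_nonneg_left h1 hA.le, mul_le_mul_of_nonneg_left h2 hA.le,
      mul_le_mul_of_nonneg_right hA1 hb2, key2]
  -- integral bound
  have hmono : (∫ t, (g t + g (-t)) * p t) ≤ ∫ t, (2 * b ^ 2 / s) * p t := by
    apply integral_mono _ (hp_int.const_mul _)
    · intro t
      exact mul_le_mul_of_nonneg_right (hpt t) (hp_nonneg t)
    · have : (fun t => (g t + g (-t)) * p t) = fun t => g t * p t + g (-t) * p t := by
        funext t; ring
      rw [this]; exact hint.add hint'
  have hsplit : (∫ t, (g t + g (-t)) * p t) = (∫ t, g t * p t) + ∫ t, g (-t) * p t := by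
    have : (fun t => (g t + g (-t)) * p t) = fun t => g t * p t + g (-t) * p t := by
      funext t; ring
    rw [this]; exact integral_add hint hint'
  have hconst : (∫ t, (2 * b ^ 2 / s) * p t) = 2 * b ^ 2 / s := by
    rw [integral_const_mul, hp_prob, mul_one]
  have hI : (∫ t, g t * p t) ≤ b ^ 2 / s := by
    have := hmono
    rw [hsplit, hconst, ← hsymm] at this
    have h2bs : 2 * b ^ 2 / s = 2 * (b ^ 2 / s) := by ring
    linarith
  calc s * ∫ t, g t * p t ≤ s * (b ^ 2 / s) :=
        mul_le_mul_of_nonneg_left hI hs0.le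
    _ = b ^ 2 := by field_simp
end

section
/- Let g(z) = -σ² exp(-(y-f(x))²/σ²) + σ² exp(-(y-f*(x))²/σ²) for measurable bounded functions f, f*. Then ‖g‖_∞ ≤ 2σ², and for any probability measure ρ on the domain, E[g²] ≤ (2/e)·σ² · E[(f(X) - f*(X))²]. -/
open MeasureTheory

lemma deriv_bd (σ : ℝ) (hσ : 0 < σ) (t : ℝ) :
    |2 * t * Real.exp (-(t ^ 2) / σ ^ 2)| ≤ Real.sqrt (2 / Real.exp 1) * σ := by
  have hσ2 : (0:ℝ) < σ ^ 2 := by positivity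
  have hK : (0:ℝ) ≤ Real.sqrt (2 / Real.exp 1) * σ := by positivity
  set E := Real.exp (-(t ^ 2) / σ ^ 2) with hE
  have hEpos : 0 < E := Real.exp_pos _
  have hmul : Real.exp (2 * t ^ 2 / σ ^ 2 - 1) * E * E * Real.exp 1 = 1 := by
    rw [hE, ← Real.exp_add, ← Real.exp_add, ← Real.exp_add]
    rw [show 2 * t ^ 2 / σ ^ 2 - 1 + -(t ^ 2) / σ ^ 2 + -(t ^ 2) / σ ^ 2 + 1 = 0 by
      field_simp; ring]
    exact Real.exp_zero
  have hexp2 : 2 * t ^ 2 ≤ σ ^ 2 * Real.exp (2 * t ^ 2 / σ ^ 2 - 1) := by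
    have h := Real.add_one_le_exp (2 * t ^ 2 / σ ^ 2 - 1)
    have : 2 * t ^ 2 / σ ^ 2 ≤ Real.exp (2 * t ^ 2 / σ ^ 2 - 1) := by linarith
    calc 2 * t ^ 2 = σ ^ 2 * (2 * t ^ 2 / σ ^ 2) := by field_simp
    _ ≤ σ ^ 2 * Real.exp (2 * t ^ 2 / σ ^ 2 - 1) := by
        exact mul_le_mul_of_nonneg_left this hσ2.le
  have hsq : (2 * t * E) ^ 2 ≤ (Real.sqrt (2 / Real.exp 1) * σ) ^ 2 := by
    have hKsq : (Real.sqrt (2 / Real.exp 1) * σ) ^ 2 = 2 / Real.exp 1 * σ ^ 2 := by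
      rw [mul_pow, Real.sq_sqrt (by positivity)]
    rw [hKsq]
    have hepos := Real.exp_pos 1
    have hDpos := Real.exp_pos (2 * t ^ 2 / σ ^ 2 - 1)
    rw [div_mul_eq_mul_div, le_div_iff₀ hepos]
    nlinarith [mul_le_mul_of_nonneg_right hexp2 (mul_pos (mul_pos hEpos hEpos) hepos).le]
  calc |2 * t * E| = Real.sqrt ((2 * t * E) ^ 2) := (Real.sqrt_sq_eq_abs _).symm
  _ ≤ Real.sqrt ((Real.sqrt (2 / Real.exp 1) * σ) ^ 2) := Real.sqrt_le_sqrt hsq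
  _ = Real.sqrt (2 / Real.exp 1) * σ := by rw [Real.sqrt_sq hK]

lemma lip_bd (σ : ℝ) (hσ : 0 < σ) (a b : ℝ) :
    |σ ^ 2 * Real.exp (-(a ^ 2) / σ ^ 2) - σ ^ 2 * Real.exp (-(b ^ 2) / σ ^ 2)| ≤
      Real.sqrt (2 / Real.exp 1) * σ * |a - b| := by
  have hσ2 : (0:ℝ) < σ ^ 2 := by positivity
  have hd : ∀ x : ℝ, HasDerivAt (fun t : ℝ => σ ^ 2 * Real.exp (-(t ^ 2) / σ ^ 2))
      (-(2 * x * Real.exp (-(x ^ 2) / σ ^ 2))) x := by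
    intro x
    have h1 : HasDerivAt (fun t : ℝ => -(t ^ 2) / σ ^ 2) (-(2 * x) / σ ^ 2) x := by
      have := ((hasDerivAt_pow 2 x).neg).div_const (σ ^ 2)
      simpa using this
    have h2 := (h1.exp).const_mul (σ ^ 2)
    refine h2.congr_deriv ?_
    field_simp
  have := convex_univ.norm_image_sub_le_of_norm_hasDerivWithin_le
    (f := fun t : ℝ => σ ^ 2 * Real.exp (-(t ^ 2) / σ ^ 2))
    (f' := fun x => -(2 * x * Real.exp (-(x ^ 2) / σ ^ 2)))
    (s := Set.univ) (C := Real.sqrt (2 / Real.exp 1) * σ)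
    (fun x _ => (hd x).hasDerivWithinAt)
    (fun x _ => by rw [Real.norm_eq_abs, abs_neg]; exact deriv_bd σ hσ x)
    (Set.mem_univ b) (Set.mem_univ a)
  simpa [Real.norm_eq_abs] using this

theorem g_bound_and_variance {𝒳 : Type*} [MeasurableSpace 𝒳]
    (σ : ℝ) (hσ : 0 < σ) (f fstar : 𝒳 → ℝ)
    (hf_meas : Measurable f) (hfstar_meas : Measurable fstar)
    (hf_bdd : ∃ C, ∀ x, |f x| ≤ C) (hfstar_bdd : ∃ C, ∀ x, |fstar x| ≤ C)
    (ρ : Measure (𝒳 × ℝ)) [IsProbabilityMeasure ρ] :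
    (∀ z : 𝒳 × ℝ,
      |(-σ ^ 2 * Real.exp (-((z.2 - f z.1) ^ 2) / σ ^ 2) +
          σ ^ 2 * Real.exp (-((z.2 - fstar z.1) ^ 2) / σ ^ 2))| ≤ 2 * σ ^ 2) ∧
    (∫ z, (-σ ^ 2 * Real.exp (-((z.2 - f z.1) ^ 2) / σ ^ 2) +
        σ ^ 2 * Real.exp (-((z.2 - fstar z.1) ^ 2) / σ ^ 2)) ^ 2 ∂ρ ≤
      (2 / Real.exp 1) * σ ^ 2 * ∫ z, (f z.1 - fstar z.1) ^ 2 ∂ρ) := by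
  have hσ2 : (0:ℝ) < σ ^ 2 := by positivity
  have hexp1 : ∀ u : ℝ, Real.exp (-(u ^ 2) / σ ^ 2) ≤ 1 := fun u =>
    Real.exp_le_one_iff.mpr (div_nonpos_of_nonpos_of_nonneg (neg_nonpos.mpr (by positivity)) hσ2.le)
  constructor
  · intro z
    have e1 := hexp1 (z.2 - f z.1)
    have e2 := hexp1 (z.2 - fstar z.1)
    have p1 := Real.exp_pos (-((z.2 - f z.1) ^ 2) / σ ^ 2)
    have p2 := Real.exp_pos (-((z.2 - fstar z.1) ^ 2) / σ ^ 2)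
    rw [abs_le]
    constructor <;> nlinarith
  · -- pointwise bound on g²
    have hpt : ∀ z : 𝒳 × ℝ,
        (-σ ^ 2 * Real.exp (-((z.2 - f z.1) ^ 2) / σ ^ 2) +
          σ ^ 2 * Real.exp (-((z.2 - fstar z.1) ^ 2) / σ ^ 2)) ^ 2 ≤
        2 / Real.exp 1 * σ ^ 2 * (f z.1 - fstar z.1) ^ 2 := by
      intro z
      have h := lip_bd σ hσ (z.2 - fstar z.1) (z.2 - f z.1)
      have habs : |(z.2 - fstar z.1) - (z.2 - f z.1)| = |f z.1 - fstar z.1| := by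
        rw [show (z.2 - fstar z.1) - (z.2 - f z.1) = f z.1 - fstar z.1 by ring]
      rw [habs] at h
      have hK : (0:ℝ) ≤ Real.sqrt (2 / Real.exp 1) * σ := by positivity
      have hsq := mul_self_le_mul_self (abs_nonneg _) h
      have hKsq : (Real.sqrt (2 / Real.exp 1) * σ) ^ 2 = 2 / Real.exp 1 * σ ^ 2 := by
        rw [mul_pow, Real.sq_sqrt (by positivity)]
      calc (-σ ^ 2 * Real.exp (-((z.2 - f z.1) ^ 2) / σ ^ 2) +
            σ ^ 2 * Real.exp (-((z.2 - fstar z.1) ^ 2) / σ ^ 2)) ^ 2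
          = |σ ^ 2 * Real.exp (-((z.2 - fstar z.1) ^ 2) / σ ^ 2) -
              σ ^ 2 * Real.exp (-((z.2 - f z.1) ^ 2) / σ ^ 2)| ^ 2 := by
            rw [sq_abs]; ring
        _ ≤ (Real.sqrt (2 / Real.exp 1) * σ * |f z.1 - fstar z.1|) ^ 2 := by
            exact pow_le_pow_left₀ (abs_nonneg _) h 2
        _ = 2 / Real.exp 1 * σ ^ 2 * (f z.1 - fstar z.1) ^ 2 := by
            rw [mul_pow, hKsq, sq_abs]
    -- measurability
    have hgm : Measurable (fun z : 𝒳 × ℝ =>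
        -σ ^ 2 * Real.exp (-((z.2 - f z.1) ^ 2) / σ ^ 2) +
          σ ^ 2 * Real.exp (-((z.2 - fstar z.1) ^ 2) / σ ^ 2)) := by
      have h1 : Measurable (fun z : 𝒳 × ℝ => f z.1) := hf_meas.comp measurable_fst
      have h2 : Measurable (fun z : 𝒳 × ℝ => fstar z.1) := hfstar_meas.comp measurable_fst
      fun_prop
    obtain ⟨C1, hC1⟩ := hf_bdd
    obtain ⟨C2, hC2⟩ := hfstar_bdd
    have hint1 : Integrable (fun z : 𝒳 × ℝ =>
        (-σ ^ 2 * Real.exp (-((z.2 - f z.1) ^ 2) / σ ^ 2) +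
          σ ^ 2 * Real.exp (-((z.2 - fstar z.1) ^ 2) / σ ^ 2)) ^ 2) ρ := by
      apply Integrable.mono' (integrable_const ((2 * σ ^ 2) ^ 2))
      · exact (hgm.pow_const 2).aestronglyMeasurable
      · refine Filter.Eventually.of_forall fun z => ?_
        rw [Real.norm_eq_abs, abs_pow]
        have e1 := hexp1 (z.2 - f z.1); have e2 := hexp1 (z.2 - fstar z.1)
        have p1 := Real.exp_pos (-((z.2 - f z.1) ^ 2) / σ ^ 2)
        have p2 := Real.exp_pos (-((z.2 - fstar z.1) ^ 2) / σ ^ 2)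
        have : |(-σ ^ 2 * Real.exp (-((z.2 - f z.1) ^ 2) / σ ^ 2) +
            σ ^ 2 * Real.exp (-((z.2 - fstar z.1) ^ 2) / σ ^ 2))| ≤ 2 * σ ^ 2 := by
          rw [abs_le]; constructor <;> nlinarith
        exact pow_le_pow_left₀ (abs_nonneg _) this 2
    have hint2 : Integrable (fun z : 𝒳 × ℝ => (f z.1 - fstar z.1) ^ 2) ρ := by
      apply Integrable.mono' (integrable_const ((|C1| + |C2|) ^ 2))
      · exact (((hf_meas.comp measurable_fst).sub
          (hfstar_meas.comp measurable_fst)).pow_const 2).aestronglyMeasurable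
      · refine Filter.Eventually.of_forall fun z => ?_
        rw [Real.norm_eq_abs, abs_pow]
        refine pow_le_pow_left₀ (abs_nonneg _) ?_ 2
        calc |f z.1 - fstar z.1| ≤ |f z.1| + |fstar z.1| := abs_sub _ _
          _ ≤ |C1| + |C2| := add_le_add ((hC1 z.1).trans (le_abs_self C1))
              ((hC2 z.1).trans (le_abs_self C2))
    calc ∫ z, (-σ ^ 2 * Real.exp (-((z.2 - f z.1) ^ 2) / σ ^ 2) +
          σ ^ 2 * Real.exp (-((z.2 - fstar z.1) ^ 2) / σ ^ 2)) ^ 2 ∂ρ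
        ≤ ∫ z, 2 / Real.exp 1 * σ ^ 2 * (f z.1 - fstar z.1) ^ 2 ∂ρ := by
          exact integral_mono hint1 (hint2.const_mul _) hpt
      _ = 2 / Real.exp 1 * σ ^ 2 * ∫ z, (f z.1 - fstar z.1) ^ 2 ∂ρ := by
          rw [integral_const_mul]
end
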